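/- The inverse of the n×n matrix R_n with entries C(i-1, n-j) is the matrix with entries (-1)^(n+i+j+1) C(n-i, j-1); i.e., their product is the identity matrix. -/

import Mathlib

/-- `R n` is the `n × n` integer matrix whose 1-based `(i,j)` entry is `C(i-1, n-j)`. -/
def Rmat (n : ℕ) : Matrix (Fin n) (Fin n) ℤ :=
  Matrix.of fun i j => (Nat.choose i.1 (n - 1 - j.1) : ℤ)

lemma negpow_congr (a b : ℕ) (h : a % 2 = b % 2) : (-1 : ℤ) ^ a = (-1) ^ b := by
  conv_lhs => rw [← Nat.div_add_mod a 2]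
  conv_rhs => rw [← Nat.div_add_mod b 2]
  rw [pow_add, pow_add, pow_mul, pow_mul]
  simp [h]

lemma key (n i j : ℕ) (hi : i < n) (hj : j < n) :
    ∑ m ∈ Finset.range n, (-1 : ℤ) ^ (m + j) * (Nat.choose i m : ℤ) * (Nat.choose m j : ℤ)
      = if i = j then 1 else 0 := by
  rcases lt_or_ge i j with h | h
  · rw [if_neg (by omega)]
    apply Finset.sum_eq_zero
    intro m _
    rcases lt_or_ge m j with hm | hm
    · rw [Nat.choose_eq_zero_of_lt hm]; ring
    · rw [Nat.choose_eq_zero_of_lt (by omega)]; push_cast; ring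
  · -- j ≤ i : restrict the sum to Ico j (i+1)
    have hsub : Finset.Ico j (i + 1) ⊆ Finset.range n := by
      intro m hm; simp at hm ⊢; omega
    rw [← Finset.sum_subset hsub (by
      intro m hm hm2
      simp only [Finset.mem_range, Finset.mem_Ico, not_and, not_lt] at hm hm2
      rcases lt_or_ge m j with h1 | h1
      · rw [Nat.choose_eq_zero_of_lt h1]; ring
      · rw [Nat.choose_eq_zero_of_lt (by omega : i < m)]; push_cast; ring)]
    rw [Finset.sum_Ico_eq_sum_range]
    have hrw : ∀ t ∈ Finset.range (i + 1 - j),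
        (-1 : ℤ) ^ (j + t + j) * (Nat.choose i (j + t) : ℤ) * (Nat.choose (j + t) j : ℤ)
          = (Nat.choose i j : ℤ) * ((-1 : ℤ) ^ t * (Nat.choose (i - j) t : ℤ)) := by
      intro t ht
      simp only [Finset.mem_range] at ht
      have hle : j + t ≤ i := by omega
      have := Nat.choose_mul (n := i) (k := j + t) (s := j) (by omega)
      have h2 : (Nat.choose i (j + t) : ℤ) * (Nat.choose (j + t) j : ℤ)
          = (Nat.choose i j : ℤ) * (Nat.choose (i - j) t : ℤ) := by
        have h3 : j + t - j = t := by omega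
        rw [h3] at this
        exact_mod_cast congrArg (Nat.cast : ℕ → ℤ) this
      have hpow : (-1 : ℤ) ^ (j + t + j) = (-1) ^ t := negpow_congr _ _ (by omega)
      rw [hpow, mul_assoc, h2]; ring
    rw [Finset.sum_congr rfl hrw, ← Finset.mul_sum]
    have hrange : i + 1 - j = (i - j) + 1 := by omega
    rw [hrange, Int.alternating_sum_range_choose]
    rcases eq_or_ne i j with rfl | hne
    · simp
    · rw [if_neg (by omega), if_neg hne, mul_zero]

/-- The inverse of `R_n` is the matrix with 1-based `(i,j)` entry
`(-1)^(n+i+j+1) C(n-i, j-1)`: their product is the identity. -/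
theorem Rmat_inverse (n : ℕ) :
    Rmat n *
      Matrix.of (fun i j : Fin n =>
        (-1 : ℤ) ^ (n + i.1 + j.1 + 1) * (Nat.choose (n - 1 - i.1) j.1 : ℤ)) = 1 := by
  ext i j
  rw [Matrix.mul_apply]
  simp only [Rmat, Matrix.of_apply, Matrix.one_apply]
  rw [Fin.sum_univ_eq_sum_range
    (fun k => (Nat.choose i.1 (n - 1 - k) : ℤ) *
      ((-1 : ℤ) ^ (n + k + j.1 + 1) * (Nat.choose (n - 1 - k) j.1 : ℤ)))]
  have hrw : ∀ k ∈ Finset.range n,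
      (Nat.choose i.1 (n - 1 - k) : ℤ) *
        ((-1 : ℤ) ^ (n + k + j.1 + 1) * (Nat.choose (n - 1 - k) j.1 : ℤ))
      = (fun m => (-1 : ℤ) ^ (m + j.1) * (Nat.choose i.1 m : ℤ) * (Nat.choose m j.1 : ℤ))
          (n - 1 - k) := by
    intro k hk
    simp only [Finset.mem_range] at hk
    have hpow : (-1 : ℤ) ^ (n + k + j.1 + 1) = (-1) ^ ((n - 1 - k) + j.1) :=
      negpow_congr _ _ (by omega)
    rw [hpow]; ring
  rw [Finset.sum_congr rfl hrw, Finset.sum_range_reflect (fun m => (-1 : ℤ) ^ (m + j.1) * (Nat.choose i.1 m : ℤ) * (Nat.choose m j.1 : ℤ)) n, key n i.1 j.1 i.2 j.2]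
  by_cases h : i = j
  · simp [h]
  · rw [if_neg h, if_neg (fun hc => h (Fin.ext hc))]
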